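/- Let G be a mixed graph whose underlying graph is the complete graph K_n with n ≥ 4, equipped with any η-function θ. Then G is not periodic: there is no positive integer τ with U_θ^τ = I. -/

import Mathlib

/-- The reverse of an arc. -/
def arcRev {α : Type*} (a : α × α) : α × α := (a.2, a.1)

/-- The set of symmetric arcs 𝒜⁺ = 𝒜 ∪ 𝒜⁻¹ of a mixed graph given by its arc set. -/
def symArcs {n : ℕ} (A : Finset (Fin n × Fin n)) : Finset (Fin n × Fin n) :=
  A ∪ A.image arcRev

/-- The degree of a vertex in the underlying graph of a mixed graph. -/
def mixedDeg {n : ℕ} (A : Finset (Fin n × Fin n)) (x : Fin n) : ℕ :=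
  ((symArcs A).filter (fun a => a.1 = x)).card

/-- The η-function θ of a mixed graph: η on 𝒜 \ 𝒜⁻¹, -η on 𝒜⁻¹ \ 𝒜, 0 on 𝒜 ∩ 𝒜⁻¹. -/
def etaFun {n : ℕ} (A : Finset (Fin n × Fin n)) (η : ℝ) (a : Fin n × Fin n) : ℝ :=
  if a ∈ A then (if arcRev a ∈ A then 0 else η) else -η

/-- The time evolution matrix U_θ of a mixed graph equipped with an η-function. -/
noncomputable def timeEvo {n : ℕ} (A : Finset (Fin n × Fin n)) (η : ℝ) :
    Matrix {a // a ∈ symArcs A} {a // a ∈ symArcs A} ℂ :=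
  fun a b => Complex.exp (-(etaFun A η a.1) * Complex.I) *
    ((2 / (mixedDeg A b.1.2 : ℂ)) * (if a.1.1 = b.1.2 then 1 else 0) -
      (if a.1 = arcRev b.1 then 1 else 0))

open Polynomial Matrix

section Spectral


variable {ι : Type*} [Fintype ι] [DecidableEq ι]

lemma my_eval_charpoly (U : Matrix ι ι ℂ) (t : ℂ) :
    (Matrix.charpoly U).eval t = (t • (1 : Matrix ι ι ℂ) - U).det := by
  unfold Matrix.charpoly
  rw [← Polynomial.coe_evalRingHom, RingHom.map_det]
  congr 1
  ext i j
  by_cases h : i = j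
  · subst h
    simp [charmatrix_apply_eq, Matrix.one_apply]
  · simp [charmatrix_apply_ne _ _ _ h, Matrix.one_apply_ne h]

lemma root_pow_eq_one (U : Matrix ι ι ℂ) {τ : ℕ} (hτ : 0 < τ) (hU : U ^ τ = 1)
    {z : ℂ} (hz : z ∈ (Matrix.charpoly U).roots) : z ^ τ = 1 := by
  have hne : Matrix.charpoly U ≠ 0 := (Matrix.charpoly_monic U).ne_zero
  have hroot : (Matrix.charpoly U).IsRoot z := (Polynomial.mem_roots hne).1 hz
  have hdet : (z • (1 : Matrix ι ι ℂ) - U).det = 0 := by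
    rw [← my_eval_charpoly]; exact hroot
  obtain ⟨v, hv0, hv⟩ := (Matrix.exists_mulVec_eq_zero_iff).2 hdet
  have hUv : U.mulVec v = z • v := by
    rw [Matrix.sub_mulVec, Matrix.smul_mulVec, Matrix.one_mulVec, sub_eq_zero] at hv
    exact hv.symm
  have hpow : ∀ p : ℕ, (U ^ p).mulVec v = z ^ p • v := by
    intro p
    induction p with
    | zero => simp [Matrix.one_mulVec]
    | succ p ih =>
        rw [pow_succ, ← Matrix.mulVec_mulVec, hUv, Matrix.mulVec_smul, ih, smul_smul, pow_succ]
        ring_nf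
  have hv2 : v = z ^ τ • v := by
    have := hpow τ
    rwa [hU, Matrix.one_mulVec] at this
  obtain ⟨i, hi⟩ := Function.ne_iff.1 hv0
  have : v i = z ^ τ * v i := by
    conv_lhs => rw [hv2]
    rfl
  have h1 : (1 : ℂ) * v i = z ^ τ * v i := by rw [one_mul]; exact this
  exact (mul_right_cancel₀ hi h1).symm

lemma neg_map_prod (s : Multiset ℂ) (f : ℂ → ℂ) :
    (s.map fun z => -(f z)).prod = (-1) ^ Multiset.card s * (s.map f).prod := by
  induction s using Multiset.induction_on with
  | empty => simp
  | cons a s ih => simp [ih, pow_succ]; ring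

lemma trace_sq_eq_sum_sq_roots (U : Matrix ι ι ℂ) :
    (U ^ 2).trace = ((Matrix.charpoly U).roots.map fun z => z ^ 2).sum := by
  have hm := Matrix.charpoly_monic U
  have hsp : (Matrix.charpoly U).Splits := IsAlgClosed.splits _
  have hcard : Multiset.card (Matrix.charpoly U).roots = Fintype.card ι := by
    rw [(Polynomial.splits_iff_card_roots).1 hsp, Matrix.charpoly_natDegree_eq_dim]
  have hfact := hsp.eq_prod_roots_of_monic hm
  set R := (Matrix.charpoly U).roots with hR
  have heval : ∀ t : ℂ, (t • (1 : Matrix ι ι ℂ) - U).det = (R.map fun z => t - z).prod := by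
    intro t
    rw [← my_eval_charpoly, hfact]
    simp [Polynomial.eval_multiset_prod, Multiset.map_map]
  have hevaladd : ∀ t : ℂ, (t • (1 : Matrix ι ι ℂ) + U).det = (R.map fun z => t + z).prod := by
    intro t
    have h1 : t • (1 : Matrix ι ι ℂ) + U = -((-t) • (1 : Matrix ι ι ℂ) - U) := by
      rw [neg_smul]; abel
    rw [h1, Matrix.det_neg, heval]
    have h2 : (R.map fun z => -t - z).prod = (-1) ^ Multiset.card R * (R.map fun z => t + z).prod := by
      have : (fun z : ℂ => -t - z) = fun z : ℂ => -(t + z) := by funext z; ring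
      rw [this, neg_map_prod]
    rw [h2, hcard, ← mul_assoc, ← pow_add]
    rw [Even.neg_one_pow ⟨Fintype.card ι, by ring⟩, one_mul]
  have key : Matrix.charpoly (U ^ 2) = ((R.map fun z => z ^ 2).map fun z => X - C z).prod := by
    apply Polynomial.funext
    intro x
    obtain ⟨t, ht⟩ := IsAlgClosed.exists_pow_nat_eq x (n := 2) (by norm_num)
    have hexp : (t • (1 : Matrix ι ι ℂ) + U) * (t • (1 : Matrix ι ι ℂ) - U)
        = x • (1 : Matrix ι ι ℂ) - U ^ 2 := by
      rw [add_mul, mul_sub, mul_sub, smul_mul_assoc, smul_mul_assoc, one_mul,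
        mul_smul_comm, mul_one, smul_smul, pow_two]
      rw [← ht, pow_two]
      simp only [one_mul]
      abel
    rw [my_eval_charpoly, ← hexp, Matrix.det_mul, hevaladd, heval]
    rw [← Multiset.prod_map_mul]
    simp only [Polynomial.eval_multiset_prod, Multiset.map_map, Function.comp]
    congr 1
    apply Multiset.map_congr rfl
    intro z _
    simp only [Polynomial.eval_sub, Polynomial.eval_X, Polynomial.eval_C]
    rw [← ht]; ring
  rw [Matrix.trace_eq_sum_roots_charpoly, key, Polynomial.roots_multiset_prod_X_sub_C]

lemma multiset_sum_integral (M : Multiset ℂ) (h : ∀ z ∈ M, IsIntegral ℤ z) :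
    IsIntegral ℤ M.sum := by
  induction M using Multiset.induction_on with
  | empty => simpa using isIntegral_zero
  | cons a s ih =>
      rw [Multiset.sum_cons]
      exact (h a (Multiset.mem_cons_self a s)).add
        (ih fun z hz => h z (Multiset.mem_cons_of_mem hz))

lemma multiset_sq_sum (M : Multiset ℂ) (h : ∀ z ∈ M, IsIntegral ℤ z) :
    ∃ s : ℂ, IsIntegral ℤ s ∧ M.sum ^ 2 = (M.map fun z => z ^ 2).sum + 2 * s := by
  induction M using Multiset.induction_on with
  | empty => exact ⟨0, isIntegral_zero, by simp⟩
  | cons a s ih =>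
      obtain ⟨w, hw, heq⟩ := ih fun z hz => h z (Multiset.mem_cons_of_mem hz)
      have ha := h a (Multiset.mem_cons_self a s)
      have hsum := multiset_sum_integral s fun z hz => h z (Multiset.mem_cons_of_mem hz)
      refine ⟨a * s.sum + w, (ha.mul hsum).add hw, ?_⟩
      simp only [Multiset.sum_cons, Multiset.map_cons]
      linear_combination heq

lemma key_integral (U : Matrix ι ι ℂ) {τ : ℕ} (hτ : 0 < τ) (hU : U ^ τ = 1) :
    ∃ s : ℂ, IsIntegral ℤ s ∧ (U ^ 2).trace = U.trace ^ 2 - 2 * s := by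
  have hint : ∀ z ∈ (Matrix.charpoly U).roots, IsIntegral ℤ z := by
    intro z hz
    refine ⟨X ^ τ - C 1, Polynomial.monic_X_pow_sub_C 1 hτ.ne', ?_⟩
    have := root_pow_eq_one U hτ hU hz
    simp [this]
  obtain ⟨s, hs, hsum⟩ := multiset_sq_sum _ hint
  refine ⟨s, hs, ?_⟩
  rw [trace_sq_eq_sum_sq_roots, Matrix.trace_eq_sum_roots_charpoly, hsum]
  ring

end Spectral

section Comb


variable {n : ℕ} {A : Finset (Fin n × Fin n)}

lemma symArcs_eq (hirr : ∀ x : Fin n, (x, x) ∉ A)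
    (hcomplete : ∀ x y : Fin n, x ≠ y → (x, y) ∈ symArcs A) :
    symArcs A = Finset.univ.filter (fun a => a.1 ≠ a.2) := by
  ext a
  simp only [Finset.mem_filter, Finset.mem_univ, true_and]
  constructor
  · intro h
    rcases Finset.mem_union.1 h with h' | h'
    · intro he
      apply hirr a.1
      obtain ⟨x, y⟩ := a
      cases he
      exact h'
    · obtain ⟨b, hb, hba⟩ := Finset.mem_image.1 h'
      intro he
      apply hirr b.1
      have h1 : a.1 = b.2 := by rw [← hba]; rfl
      have h2 : a.2 = b.1 := by rw [← hba]; rfl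
      obtain ⟨x, y⟩ := b
      simp only at h1 h2
      have hyx : y = x := by rw [← h1, he, h2]
      subst hyx
      simpa using hb
  · intro h
    have := hcomplete a.1 a.2 h
    rwa [Prod.mk.eta] at this

lemma mem_symArcs (hirr : ∀ x : Fin n, (x, x) ∉ A)
    (hcomplete : ∀ x y : Fin n, x ≠ y → (x, y) ∈ symArcs A) {a : Fin n × Fin n} :
    a ∈ symArcs A ↔ a.1 ≠ a.2 := by
  rw [symArcs_eq hirr hcomplete]; simp

lemma mixedDeg_eq (hirr : ∀ x : Fin n, (x, x) ∉ A)
    (hcomplete : ∀ x y : Fin n, x ≠ y → (x, y) ∈ symArcs A) (x : Fin n) :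
    mixedDeg A x = n - 1 := by
  unfold mixedDeg
  rw [symArcs_eq hirr hcomplete, Finset.filter_filter]
  have hset : (Finset.univ.filter fun a : Fin n × Fin n => a.1 ≠ a.2 ∧ a.1 = x)
      = {x} ×ˢ (Finset.univ.erase x) := by
    ext a
    simp only [Finset.mem_filter, Finset.mem_univ, true_and, Finset.mem_product,
      Finset.mem_singleton, Finset.mem_erase]
    constructor
    · rintro ⟨h1, h2⟩
      refine ⟨h2, ?_, trivial⟩
      rw [← h2]; exact fun hh => h1 (by rw [hh])
    · rintro ⟨h1, h2, -⟩
      exact ⟨by rw [h1]; exact fun hh => h2 (by rw [← hh]), h1⟩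
  rw [hset, Finset.card_product, Finset.card_singleton, Finset.card_erase_of_mem
    (Finset.mem_univ x), one_mul, Finset.card_univ, Fintype.card_fin]

lemma card_symArcs (hirr : ∀ x : Fin n, (x, x) ∉ A)
    (hcomplete : ∀ x y : Fin n, x ≠ y → (x, y) ∈ symArcs A) :
    (symArcs A).card = n * (n - 1) := by
  rw [Finset.card_eq_sum_card_fiberwise
    (f := Prod.fst) (t := Finset.univ) (fun a _ => Finset.mem_univ a.1)]
  have : ∀ x : Fin n, ((symArcs A).filter fun a => a.1 = x).card = n - 1 :=
    fun x => mixedDeg_eq hirr hcomplete x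
  rw [Finset.sum_congr rfl fun x _ => this x, Finset.sum_const, Finset.card_univ,
    Fintype.card_fin, smul_eq_mul]

lemma arcRev_mem (hirr : ∀ x : Fin n, (x, x) ∉ A)
    (hcomplete : ∀ x y : Fin n, x ≠ y → (x, y) ∈ symArcs A) {a : Fin n × Fin n}
    (h : a ∈ symArcs A) : arcRev a ∈ symArcs A := by
  rw [mem_symArcs hirr hcomplete] at h ⊢
  exact fun hh => h (by rw [show arcRev a = (a.2, a.1) from rfl] at hh; exact hh.symm)

lemma etaFun_rev (η : ℝ) {a : Fin n × Fin n} (h : a ∈ symArcs A) :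
    etaFun A η (arcRev a) = - etaFun A η a := by
  have hmem : a ∈ A ∨ arcRev a ∈ A := by
    rcases Finset.mem_union.1 h with h' | h'
    · exact Or.inl h'
    · obtain ⟨b, hb, hba⟩ := Finset.mem_image.1 h'
      right
      have : arcRev a = b := by rw [← hba]; simp [arcRev]
      rwa [this]
  have h2 : arcRev (arcRev a) = a := by simp [arcRev]
  by_cases h1 : a ∈ A <;> by_cases hr : arcRev a ∈ A <;>
    simp [etaFun, h1, hr, h2] <;> tauto

end Comb

/-- a mixed complete graph on n ≥ 4 vertices is not periodic, for any
η-function. -/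
theorem mixed_complete_not_periodic (n : ℕ) (hn : 4 ≤ n)
    (A : Finset (Fin n × Fin n)) (hirr : ∀ x : Fin n, (x, x) ∉ A)
    (hcomplete : ∀ x y : Fin n, x ≠ y → (x, y) ∈ symArcs A) (η : ℝ) :
    ¬ ∃ τ : ℕ, 0 < τ ∧ timeEvo A η ^ τ = 1 := by
  rintro ⟨τ, hτ, hUτ⟩
  set U := timeEvo A η with hUdef
  have hdeg : ∀ x, mixedDeg A x = n - 1 := mixedDeg_eq hirr hcomplete
  set c : ℂ := 2 / ((n - 1 : ℕ) : ℂ) - 1 with hc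
  -- trace of U is zero
  have htr : U.trace = 0 := by
    apply Finset.sum_eq_zero
    intro a _
    have hne : a.1.1 ≠ a.1.2 := (mem_symArcs hirr hcomplete).1 a.2
    have h2 : a.1 ≠ arcRev a.1 := fun h => hne (congrArg Prod.fst h)
    simp [hUdef, Matrix.diag, timeEvo, hne, h2]
  -- off-"diagonal" products vanish
  have hterm : ∀ a b : {a // a ∈ symArcs A}, b.1 ≠ arcRev a.1 → U a b * U b a = 0 := by
    intro a b hb
    by_cases h1 : a.1.1 = b.1.2
    · by_cases h2 : b.1.1 = a.1.2
      · exact absurd (Prod.ext h2 h1.symm) hb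
      · have h0 : U b a = 0 := by simp [hUdef, timeEvo, h2, hb]
        rw [h0, mul_zero]
    · have h3 : a.1 ≠ arcRev b.1 := fun h => h1 (by rw [h]; rfl)
      have h0 : U a b = 0 := by simp [hUdef, timeEvo, h1, h3]
      rw [h0, zero_mul]
  -- the diagonal of U^2
  have hmain : ∀ a : {a // a ∈ symArcs A},
      U a ⟨arcRev a.1, arcRev_mem hirr hcomplete a.2⟩ *
        U ⟨arcRev a.1, arcRev_mem hirr hcomplete a.2⟩ a = c ^ 2 := by
    intro a
    have hrev := arcRev_mem hirr hcomplete a.2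
    have e1 : U a ⟨arcRev a.1, hrev⟩ = Complex.exp (-(etaFun A η a.1) * Complex.I) * c := by
      show timeEvo A η a ⟨arcRev a.1, hrev⟩ = _
      simp [timeEvo, arcRev, hdeg, hc]
    have e2 : U ⟨arcRev a.1, hrev⟩ a = Complex.exp (-(etaFun A η (arcRev a.1)) * Complex.I) * c := by
      show timeEvo A η ⟨arcRev a.1, hrev⟩ a = _
      simp [timeEvo, arcRev, hdeg, hc]
    rw [e1, e2, etaFun_rev η a.2]
    have harg : (-(etaFun A η a.1 : ℂ)) * Complex.I +
        (-((- etaFun A η a.1 : ℝ) : ℂ)) * Complex.I = 0 := by push_cast; ring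
    calc Complex.exp (-(etaFun A η a.1 : ℂ) * Complex.I) * c *
          (Complex.exp (-((- etaFun A η a.1 : ℝ) : ℂ) * Complex.I) * c)
        = Complex.exp (-(etaFun A η a.1 : ℂ) * Complex.I) *
            Complex.exp (-((- etaFun A η a.1 : ℝ) : ℂ) * Complex.I) * c ^ 2 := by ring
      _ = c ^ 2 := by rw [← Complex.exp_add, harg, Complex.exp_zero, one_mul]
  -- the trace of U^2
  have htr2 : (U ^ 2).trace = ((n * (n - 1) : ℕ) : ℂ) * c ^ 2 := by
    rw [pow_two]
    have hdiag : ∀ a : {a // a ∈ symArcs A}, (U * U) a a = c ^ 2 := by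
      intro a
      rw [Matrix.mul_apply]
      rw [Finset.sum_eq_single_of_mem ⟨arcRev a.1, arcRev_mem hirr hcomplete a.2⟩
        (Finset.mem_univ _) (fun b _ hbne => hterm a b (fun h => hbne (Subtype.ext h)))]
      exact hmain a
    have : (U * U).trace = ∑ a : {a // a ∈ symArcs A}, c ^ 2 :=
      Finset.sum_congr rfl fun a _ => hdiag a
    rw [this, Finset.sum_const, Finset.card_univ, Fintype.card_coe,
      card_symArcs hirr hcomplete, nsmul_eq_mul]
  -- the integrality constraint
  obtain ⟨s, hs, hkey⟩ := key_integral U hτ hUτ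
  rw [htr2, htr] at hkey
  set d : ℚ := ((n - 1 : ℕ) : ℚ) with hd
  have hdne : d ≠ 0 := Nat.cast_ne_zero.2 (by omega)
  set q : ℚ := -(((n * (n - 1) : ℕ) : ℚ) * (2 / d - 1) ^ 2) / 2 with hq
  have hsval : s = ((q : ℚ) : ℂ) := by
    have hcast : ((q : ℚ) : ℂ) = -(((n * (n - 1) : ℕ) : ℂ) * c ^ 2) / 2 := by
      rw [hq, hd, hc]; push_cast; ring
    rw [hcast]
    linear_combination (1/2 : ℂ) * hkey
  have hQint : IsIntegral ℤ q := by
    rw [hsval] at hs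
    rwa [show ((q : ℚ) : ℂ) = algebraMap ℚ ℂ q from rfl,
      isIntegral_algebraMap_iff ((algebraMap ℚ ℂ).injective)] at hs
  obtain ⟨z, hz⟩ := IsIntegrallyClosed.isIntegral_iff.1 hQint
  have hzq : (z : ℚ) = q := hz
  rw [hq] at hzq
  have h1 : ((n * (n - 1) : ℕ) : ℚ) = (n : ℚ) * d := by rw [hd]; push_cast; ring
  rw [h1] at hzq
  have h2 : (z : ℚ) * (2 * d ^ 2) = -((n : ℚ) * d * (2 - d) ^ 2) := by
    rw [hzq]
    have hx : (2 / d - 1) * d = 2 - d := by field_simp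
    linear_combination (-(n : ℚ) * d * ((2 / d - 1) * d + (2 - d))) * hx
  have h3 : ((z : ℚ) * 2 * d) * d = (-(n : ℚ) * (2 - d) ^ 2) * d := by linear_combination h2
  have h4 := mul_right_cancel₀ hdne h3
  have hcast2 : d = (n : ℚ) - 1 := by
    rw [hd]; push_cast [Nat.cast_sub (show 1 ≤ n by omega)]; ring
  rw [hcast2] at h4
  have hZ : z * 2 * ((n : ℤ) - 1) = -(n : ℤ) * (2 - ((n : ℤ) - 1)) ^ 2 := by
    exact_mod_cast h4
  have hdvd : ((n : ℤ) - 1) ∣ 4 :=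
    ⟨-2 * z - ((n : ℤ) - 1) * ((n : ℤ) - 4), by linear_combination hZ⟩
  have h5 : (n : ℤ) - 1 ≤ 4 := Int.le_of_dvd (by norm_num) hdvd
  have h6 : n = 4 ∨ n = 5 := by omega
  rcases h6 with rfl | rfl
  · norm_num at hZ
    omega
  · norm_num at hZ
    omega
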